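/- arXiv:1510.02800 — 2 statements merged into one kernel-verified Lean document; each statement's English description precedes it below -/
import Mathlib

section
/- Let ρ_1, ..., ρ_Z be Z-dimensional quantum states and let (E_1,...,E_Z) be a Z-dimensional POVM with Z outcomes such that tr(ρ_z E_z) = 1 for all z ∈ {1,...,Z}. Then there exists an orthonormal basis (ψ_1,...,ψ_Z) of ℂ^Z such that ρ_z = E_z = ψ_z ψ_z* for all z; in particular every ρ_z is a rank-one orthogonal projection. -/
open Matrix
open scoped ComplexOrder

/-- A `d`-dimensional quantum state. -/
def IsState {d : ℕ} (ρ : Matrix (Fin d) (Fin d) ℂ) : Prop :=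
  ρ.PosSemidef ∧ ρ.trace = 1

/-- A `d`-dimensional POVM with `Z` outcomes. -/
def IsPOVM {d Z : ℕ} (E : Fin Z → Matrix (Fin d) (Fin d) ℂ) : Prop :=
  (∀ z, (E z).PosSemidef) ∧ ∑ z, E z = 1

/-- The rank-one matrix `ψψ*` with entries `ψ_k ⬝ conj (ψ_l)`. -/
def outer {d : ℕ} (ψ : Fin d → ℂ) : Matrix (Fin d) (Fin d) ℂ :=
  Matrix.of fun k l => ψ k * (starRingEnd ℂ) (ψ l)

variable {n : Type*} [Fintype n] [DecidableEq n]

lemma diag_nonneg {A : Matrix n n ℂ} (hA : A.PosSemidef) (i : n) : 0 ≤ A i i := by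
  have := hA.diag_nonneg (i := i)
  simpa [dotProduct, mulVec, Pi.single_apply] using this

open scoped MatrixOrder in
lemma psd_trace_zero {A : Matrix n n ℂ} (hA : A.PosSemidef) (h : A.trace = 0) : A = 0 := by
  obtain ⟨S, hS, hSS⟩ : ∃ S : Matrix n n ℂ, S.IsHermitian ∧ S * S = A :=
    ⟨CFC.sqrt A, (CFC.sqrt_nonneg A).posSemidef.1, CFC.sqrt_mul_sqrt_self A hA.nonneg⟩
  have hA' : Sᴴ * S = A := by rw [hS.eq, hSS]
  have h0 : (Sᴴ * S).trace = 0 := by rw [hA']; exact h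
  have hnn : ∀ j, 0 ≤ (Sᴴ * S) j j := diag_nonneg (posSemidef_conjTranspose_mul_self S)
  have hdiag : ∀ j, (Sᴴ * S) j j = 0 := fun j =>
    (Finset.sum_eq_zero_iff_of_nonneg (fun j _ => hnn j)).mp h0 j (Finset.mem_univ j)
  have hScol : S = 0 := by
    ext i j
    have hj : dotProduct (star (fun k => S k j)) (fun k => S k j) = 0 := by
      have := hdiag j
      rw [Matrix.mul_apply] at this
      simpa [dotProduct, conjTranspose_apply] using this
    exact congrFun (dotProduct_star_self_eq_zero.mp hj) i
  rw [← hA', hScol]; simp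

open scoped MatrixOrder in
lemma psd_mul_idem_zero {A G : Matrix n n ℂ} (hA : A.PosSemidef) (hG : G.IsHermitian)
    (hGG : G * G = G) (h : (A * G).trace = 0) : A * G = 0 := by
  obtain ⟨S, hS, hSS⟩ : ∃ S : Matrix n n ℂ, S.IsHermitian ∧ S * S = A :=
    ⟨CFC.sqrt A, (CFC.sqrt_nonneg A).posSemidef.1, CFC.sqrt_mul_sqrt_self A hA.nonneg⟩
  have hGAG : (Gᴴ * A * G).PosSemidef := hA.conjTranspose_mul_mul_same G
  rw [hG.eq] at hGAG
  have htr : (G * A * G).trace = 0 := by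
    rw [Matrix.trace_mul_cycle, hGG, Matrix.trace_mul_comm, h]
  have hzero : G * A * G = 0 := psd_trace_zero hGAG htr
  have hSG : S * G = 0 := by
    have : (S * G)ᴴ * (S * G) = 0 := by
      rw [conjTranspose_mul, hS.eq, hG.eq]
      calc G * S * (S * G) = G * (S * S) * G := by noncomm_ring
        _ = 0 := by rw [hSS, hzero]
    exact Matrix.conjTranspose_mul_self_eq_zero.mp this
  calc A * G = S * (S * G) := by rw [← Matrix.mul_assoc, hSS]
    _ = 0 := by rw [hSG, Matrix.mul_zero]

lemma key {Z : ℕ} {ρ A : Matrix (Fin Z) (Fin Z) ℂ} (hρ : ρ.PosSemidef) (htr : ρ.trace = 1)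
    (hA : A.PosSemidef) (hIA : ((1 : Matrix (Fin Z) (Fin Z) ℂ) - A).PosSemidef)
    (hprod : (ρ * A).trace = 1) :
    1 ≤ A.trace.re ∧
    (A.trace = 1 → ∃ ψ : Fin Z → ℂ,
      (∑ k, (starRingEnd ℂ) (ψ k) * ψ k) = 1 ∧ ρ = outer ψ ∧ A = outer ψ) := by
  classical
  have hH : ρ.IsHermitian := hρ.1
  set U : Matrix (Fin Z) (Fin Z) ℂ := (hH.eigenvectorUnitary : Matrix (Fin Z) (Fin Z) ℂ) with hUdef
  have hUU : Uᴴ * U = 1 := by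
    simpa [hUdef, Matrix.star_eq_conjTranspose] using
      (Matrix.mem_unitaryGroup_iff'.mp hH.eigenvectorUnitary.2)
  have hUU' : U * Uᴴ = 1 := by
    simpa [hUdef, Matrix.star_eq_conjTranspose] using
      (Matrix.mem_unitaryGroup_iff.mp hH.eigenvectorUnitary.2)
  set lam : Fin Z → ℝ := hH.eigenvalues with hlamdef
  have hlam_nn : ∀ i, 0 ≤ lam i := fun i => hρ.eigenvalues_nonneg i
  have hspec : ρ = U * Matrix.diagonal (fun i => (lam i : ℂ)) * Uᴴ := by
    have := hH.spectral_theorem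
    rw [Unitary.conjStarAlgAut_apply, Matrix.star_eq_conjTranspose] at this
    exact this
  set D : Matrix (Fin Z) (Fin Z) ℂ := Matrix.diagonal (fun i => (lam i : ℂ)) with hD
  set F : Matrix (Fin Z) (Fin Z) ℂ := Uᴴ * A * U with hF
  have hFpsd : F.PosSemidef := hA.conjTranspose_mul_mul_same U
  have hIFpsd : ((1 : Matrix (Fin Z) (Fin Z) ℂ) - F).PosSemidef := by
    have : (1 : Matrix (Fin Z) (Fin Z) ℂ) - F = Uᴴ * (1 - A) * U := by
      rw [Matrix.mul_sub, Matrix.sub_mul, Matrix.mul_one, hUU, hF]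
    rw [this]
    exact hIA.conjTranspose_mul_mul_same U
  -- diagonal entries of F
  have hFnn : ∀ i, 0 ≤ (F i i).re ∧ (F i i).im = 0 := by
    intro i
    have := diag_nonneg hFpsd i
    rw [Complex.le_def] at this
    exact ⟨by simpa using this.1, by simpa using this.2.symm⟩
  have hFle : ∀ i, (F i i).re ≤ 1 := by
    intro i
    have := diag_nonneg hIFpsd i
    rw [Matrix.sub_apply, Matrix.one_apply_eq, Complex.le_def] at this
    simp only [Complex.zero_re, Complex.sub_re, Complex.one_re] at this
    linarith [this.1]
  -- trace identities
  have htrF : F.trace = A.trace := by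
    rw [hF, Matrix.trace_mul_cycle, hUU', Matrix.one_mul]
  have hDtr : D.trace = 1 := by
    have hh : ρ.trace = D.trace := by
      rw [hspec, Matrix.trace_mul_cycle, hUU, Matrix.one_mul]
    rw [← hh, htr]
  have hsumlamC : (∑ i, (lam i : ℂ)) = 1 := by
    simpa [hD, Matrix.trace_diagonal] using hDtr
  have hsumlam : ∑ i, lam i = 1 := by
    have := hsumlamC
    push_cast at this
    exact_mod_cast this
  have hDF : ∑ i, (lam i : ℂ) * F i i = 1 := by
    have h1 : (ρ * A).trace = (D * F).trace := by
      rw [hspec, hF]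
      rw [show U * D * Uᴴ * A = U * (D * (Uᴴ * A)) by noncomm_ring,
        Matrix.trace_mul_comm U (D * (Uᴴ * A))]
      congr 1
      noncomm_ring
    have h2 : (D * F).trace = ∑ i, (lam i : ℂ) * F i i := by
      simp [Matrix.trace, Matrix.diag, hD, Matrix.diagonal_mul]
    rw [← h2, ← h1, hprod]
  have hDFre : ∑ i, lam i * (F i i).re = 1 := by
    have := congrArg Complex.re hDF
    simpa [Complex.mul_re, (fun i => (hFnn i).2)] using this
  -- each lam i * re(F i i) = lam i
  have heach : ∀ i, lam i * (F i i).re = lam i := by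
    have hle : ∀ i ∈ Finset.univ, lam i * (F i i).re ≤ lam i := fun i _ =>
      mul_le_of_le_one_right (hlam_nn i) (hFle i)
    have hsum : ∑ i, lam i * (F i i).re = ∑ i, lam i := by rw [hDFre, hsumlam]
    intro i
    exact (Finset.sum_eq_sum_iff_of_le hle).mp hsum i (Finset.mem_univ i)
  set supp : Finset (Fin Z) := Finset.univ.filter (fun i => lam i ≠ 0) with hsupp
  have hFsupp : ∀ i ∈ supp, (F i i).re = 1 := by
    intro i hi
    rw [hsupp, Finset.mem_filter] at hi
    exact mul_left_cancel₀ hi.2 (by rw [mul_one]; exact heach i)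
  have hsuppne : supp.Nonempty := by
    rw [Finset.filter_nonempty_iff]
    by_contra hc
    push_neg at hc
    have : ∑ i, lam i = 0 := Finset.sum_eq_zero (fun i hi => hc i hi)
    rw [hsumlam] at this; norm_num at this
  have hcard_le : (supp.card : ℝ) ≤ A.trace.re := by
    have h1 : A.trace.re = ∑ i, (F i i).re := by
      rw [← htrF, Matrix.trace]
      simp [Matrix.diag, Complex.re_sum]
    rw [h1]
    calc (supp.card : ℝ) = ∑ i ∈ supp, (F i i).re := by
          rw [Finset.sum_congr rfl hFsupp]; simp
      _ ≤ ∑ i, (F i i).re := Finset.sum_le_sum_of_subset_of_nonneg (Finset.subset_univ supp)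
          (fun i _ _ => (hFnn i).1)
  constructor
  · calc (1:ℝ) ≤ (supp.card : ℝ) := Nat.one_le_cast.mpr (Finset.card_pos.mpr hsuppne)
      _ ≤ A.trace.re := hcard_le
  intro htrA
  -- the support is a single eigenvalue, equal to 1
  have hcard1 : supp.card = 1 := by
    have hle1 : supp.card ≤ 1 := by
      have h1 : (supp.card : ℝ) ≤ 1 := by
        have := hcard_le; rw [htrA] at this; simpa using this
      exact_mod_cast h1
    have h2 : 1 ≤ supp.card := Finset.card_pos.mpr hsuppne
    omega
  obtain ⟨i0, hi0⟩ := Finset.card_eq_one.mp hcard1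
  have hlam0 : ∀ i, i ≠ i0 → lam i = 0 := by
    intro i hi
    by_contra hc
    have hmem : i ∈ supp := by rw [hsupp, Finset.mem_filter]; exact ⟨Finset.mem_univ i, hc⟩
    rw [hi0, Finset.mem_singleton] at hmem
    exact hi hmem
  have hlam1 : lam i0 = 1 := by
    have hs : ∑ i, lam i = lam i0 :=
      Finset.sum_eq_single i0 (fun b _ hb => hlam0 b hb)
        (fun h => absurd (Finset.mem_univ i0) h)
    rw [← hs, hsumlam]
  set ψ : Fin Z → ℂ := fun k => U k i0 with hψ
  have hunit : (∑ k, (starRingEnd ℂ) (ψ k) * ψ k) = 1 := by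
    have h1 : (Uᴴ * U) i0 i0 = (1 : Matrix (Fin Z) (Fin Z) ℂ) i0 i0 := by rw [hUU]
    rw [Matrix.mul_apply] at h1
    simpa [Matrix.conjTranspose_apply, Matrix.one_apply, hψ] using h1
  have hρouter : ρ = outer ψ := by
    ext k l
    rw [hspec]
    show (U * D * Uᴴ) k l = outer ψ k l
    rw [Matrix.mul_apply]
    calc ∑ j, (U * D) k j * Uᴴ j l
        = ∑ j, U k j * (lam j : ℂ) * (starRingEnd ℂ) (U l j) := by
          refine Finset.sum_congr rfl fun j _ => ?_
          rw [hD, Matrix.mul_diagonal, Matrix.conjTranspose_apply]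
          rfl
      _ = U k i0 * (starRingEnd ℂ) (U l i0) := by
          rw [Finset.sum_eq_single i0]
          · rw [hlam1]; simp
          · intro b _ hb; rw [hlam0 b hb]; simp
          · intro hmm; exact absurd (Finset.mem_univ i0) hmm
      _ = outer ψ k l := rfl
  have hFi0 : F i0 i0 = 1 := by
    have h1 : (F i0 i0).re = 1 :=
      hFsupp i0 (by rw [hi0]; exact Finset.mem_singleton_self i0)
    have h2 := (hFnn i0).2
    exact Complex.ext (by simpa using h1) (by simpa using h2)
  have hkey : (∑ b, (∑ a, (starRingEnd ℂ) (ψ a) * A a b) * ψ b) = 1 := by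
    rw [← hFi0, hF]
    rw [Matrix.mul_apply]
    refine Finset.sum_congr rfl fun b _ => ?_
    rw [Matrix.mul_apply, Finset.sum_mul, Finset.sum_mul]
    refine Finset.sum_congr rfl fun a _ => ?_
    rw [Matrix.conjTranspose_apply]
    rfl
  set P : Matrix (Fin Z) (Fin Z) ℂ := outer ψ with hP
  have hPH : P.IsHermitian := by
    ext k l
    show star (P l k) = P k l
    simp only [hP, outer, Matrix.of_apply, star_mul', Complex.star_def, Complex.conj_conj]
    ring
  have hPP : P * P = P := by
    ext k l
    show ∑ m, P k m * P m l = P k l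
    calc ∑ m, P k m * P m l
        = (ψ k * (starRingEnd ℂ) (ψ l)) * ∑ m, (starRingEnd ℂ) (ψ m) * ψ m := by
          rw [Finset.mul_sum]
          refine Finset.sum_congr rfl fun m _ => ?_
          show (ψ k * (starRingEnd ℂ) (ψ m)) * (ψ m * (starRingEnd ℂ) (ψ l)) = _
          ring
      _ = ψ k * (starRingEnd ℂ) (ψ l) := by rw [hunit, mul_one]
      _ = P k l := rfl
  have htraceAP : (A * P).trace = 1 := by
    rw [← hkey]
    show ∑ k, (A * P) k k = _
    calc ∑ k, (A * P) k k = ∑ k, ∑ a, A k a * (ψ a * (starRingEnd ℂ) (ψ k)) := by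
          refine Finset.sum_congr rfl fun k _ => ?_
          rw [Matrix.mul_apply]
          rfl
      _ = ∑ a, ∑ k, A k a * (ψ a * (starRingEnd ℂ) (ψ k)) := Finset.sum_comm
      _ = ∑ b, (∑ a, (starRingEnd ℂ) (ψ a) * A a b) * ψ b := by
          refine Finset.sum_congr rfl fun b _ => ?_
          rw [Finset.sum_mul]
          refine Finset.sum_congr rfl fun a _ => by ring
  have htraceAG : (A * (1 - P)).trace = 0 := by
    rw [Matrix.mul_sub, Matrix.mul_one, Matrix.trace_sub, htrA, htraceAP, sub_self]
  have hGH : ((1 : Matrix (Fin Z) (Fin Z) ℂ) - P).IsHermitian := Matrix.isHermitian_one.sub hPH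
  have hGG : ((1 : Matrix (Fin Z) (Fin Z) ℂ) - P) * (1 - P) = 1 - P := by
    have hexp : ((1 : Matrix (Fin Z) (Fin Z) ℂ) - P) * (1 - P) = 1 - P - P + P * P := by
      noncomm_ring
    rw [hexp, hPP]
    abel
  have hAG : A * (1 - P) = 0 := psd_mul_idem_zero hA hGH hGG htraceAG
  have hAP : A = A * P := by
    have h1 := hAG
    rw [Matrix.mul_sub, Matrix.mul_one, sub_eq_zero] at h1
    exact h1
  have hPA : A = P * A := by
    have h1 := congrArg Matrix.conjTranspose hAP
    rwa [Matrix.conjTranspose_mul, hPH.eq, hA.1.eq] at h1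
  have hAouter : A = outer ψ := by
    have hPAP : A = P * A * P := by
      calc A = P * A := hPA
        _ = P * (A * P) := by rw [← hAP]
        _ = P * A * P := by rw [Matrix.mul_assoc]
    ext k l
    rw [hPAP]
    show (P * A * P) k l = outer ψ k l
    have hexp : (P * A * P) k l
        = (ψ k * (starRingEnd ℂ) (ψ l)) * ∑ b, (∑ a, (starRingEnd ℂ) (ψ a) * A a b) * ψ b := by
      simp only [Matrix.mul_apply, hP, outer, Matrix.of_apply, Finset.sum_mul, Finset.mul_sum]
      refine Finset.sum_congr rfl fun b _ => Finset.sum_congr rfl fun a _ => by ring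
    rw [hexp, hkey, mul_one]
    rfl
  exact ⟨ψ, hunit, hρouter, hAouter⟩

theorem stmt13 {Z : ℕ} (ρ : Fin Z → Matrix (Fin Z) (Fin Z) ℂ)
    (hρ : ∀ z, IsState (ρ z))
    (E : Fin Z → Matrix (Fin Z) (Fin Z) ℂ) (hE : IsPOVM E)
    (h : ∀ z, (ρ z * E z).trace = 1) :
    ∃ ψ : Fin Z → (Fin Z → ℂ),
      (∀ z z', (∑ k, (starRingEnd ℂ) (ψ z k) * ψ z' k) = if z = z' then 1 else 0) ∧
      ∀ z, ρ z = outer (ψ z) ∧ E z = outer (ψ z) := by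
  have hρ' : ∀ z, (ρ z).PosSemidef ∧ (ρ z).trace = 1 := hρ
  have hE' : (∀ z, (E z).PosSemidef) ∧ ∑ z, E z = 1 := hE
  clear hρ hE
  rename' hρ' => hρ, hE' => hE

  classical
  obtain ⟨hEpsd, hEsum⟩ := hE
  have hIE : ∀ z, ((1 : Matrix (Fin Z) (Fin Z) ℂ) - E z).PosSemidef := by
    intro z
    have hsub : ∑ z' ∈ Finset.univ.erase z, E z' = 1 - E z := by
      rw [Finset.sum_erase_eq_sub (Finset.mem_univ z), hEsum]
    rw [← hsub]
    exact Finset.sum_induction E _ (fun a b ha hb => ha.add hb) Matrix.PosSemidef.zero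
      (fun x _ => hEpsd x)
  have h1 : ∀ z, 1 ≤ (E z).trace.re := fun z =>
    (key (hρ z).1 (hρ z).2 (hEpsd z) (hIE z) (h z)).1
  have hsumtr : ∑ z, (E z).trace.re = (Z : ℝ) := by
    have h0 : (∑ z, (E z).trace) = (Z : ℂ) := by
      rw [← Matrix.trace_sum, hEsum, Matrix.trace_one]
      simp
    have := congrArg Complex.re h0
    simpa [Complex.re_sum] using this
  have htreq : ∀ z, (E z).trace.re = 1 := by
    intro z
    have hle : ∀ z ∈ Finset.univ, (1:ℝ) ≤ (E z).trace.re := fun z _ => h1 z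
    have hsum : ∑ _z : Fin Z, (1:ℝ) = ∑ z, (E z).trace.re := by
      rw [hsumtr]; simp
    exact ((Finset.sum_eq_sum_iff_of_le hle).mp hsum z (Finset.mem_univ z)).symm
  have htrE : ∀ z, (E z).trace = 1 := by
    intro z
    have h2 : star ((E z).trace) = (E z).trace := by
      rw [← Matrix.trace_conjTranspose, (hEpsd z).1.eq]
    have him : (E z).trace.im = 0 := Complex.conj_eq_iff_im.mp (by rwa [← Complex.star_def])
    exact Complex.ext (by simp [htreq z]) (by simp [him])
  have hmain : ∀ z, ∃ ψ : Fin Z → ℂ,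
      (∑ k, (starRingEnd ℂ) (ψ k) * ψ k) = 1 ∧ ρ z = outer ψ ∧ E z = outer ψ :=
    fun z => (key (hρ z).1 (hρ z).2 (hEpsd z) (hIE z) (h z)).2 (htrE z)
  choose ψ hψ1 hψ2 hψ3 using hmain
  refine ⟨ψ, ?_, fun z => ⟨hψ2 z, hψ3 z⟩⟩
  intro z z'
  by_cases hzz : z = z'
  · subst hzz; simpa using hψ1 z
  · rw [if_neg hzz]
    set a : Fin Z → ℂ := fun u => ∑ k, (starRingEnd ℂ) (ψ u k) * ψ z' k with ha
    have hM : ∑ u, outer (ψ u) = 1 := by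
      rw [← hEsum]; exact Finset.sum_congr rfl fun u _ => (hψ3 u).symm
    have hMkl : ∀ k l, (∑ u, ψ u k * (starRingEnd ℂ) (ψ u l))
        = if k = l then 1 else 0 := by
      intro k l
      have hh : (∑ u, outer (ψ u)) k l = (1 : Matrix (Fin Z) (Fin Z) ℂ) k l := by rw [hM]
      simpa [outer, Matrix.sum_apply, Matrix.one_apply] using hh
    have expand : ∀ u, (starRingEnd ℂ) (a u) * a u
        = ∑ k, ∑ l, (ψ u k * (starRingEnd ℂ) (ψ u l))
            * ((starRingEnd ℂ) (ψ z' k) * ψ z' l) := by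
      intro u
      rw [ha]
      simp only
      rw [map_sum, Finset.sum_mul_sum]
      refine Finset.sum_congr rfl fun k _ => Finset.sum_congr rfl fun l _ => ?_
      simp only [_root_.map_mul, Complex.conj_conj]
      ring
    have hsum1 : ∑ u, (starRingEnd ℂ) (a u) * a u = 1 := by
      calc ∑ u, (starRingEnd ℂ) (a u) * a u
          = ∑ u, ∑ k, ∑ l, (ψ u k * (starRingEnd ℂ) (ψ u l))
              * ((starRingEnd ℂ) (ψ z' k) * ψ z' l) :=
            Finset.sum_congr rfl fun u _ => expand u
        _ = ∑ k, ∑ l, (∑ u, ψ u k * (starRingEnd ℂ) (ψ u l))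
              * ((starRingEnd ℂ) (ψ z' k) * ψ z' l) := by
            rw [Finset.sum_comm]
            refine Finset.sum_congr rfl fun k _ => ?_
            rw [Finset.sum_comm]
            refine Finset.sum_congr rfl fun l _ => ?_
            rw [← Finset.sum_mul]
        _ = ∑ k, ∑ l, (if k = l then 1 else 0) * ((starRingEnd ℂ) (ψ z' k) * ψ z' l) := by
            refine Finset.sum_congr rfl fun k _ => Finset.sum_congr rfl fun l _ => by
              rw [hMkl]
        _ = ∑ k, (starRingEnd ℂ) (ψ z' k) * ψ z' k := by
            refine Finset.sum_congr rfl fun k _ => ?_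
            simp [ite_mul, Finset.sum_ite_eq]
        _ = 1 := hψ1 z'
    have hz'1 : (starRingEnd ℂ) (a z') * a z' = 1 := by
      have : a z' = 1 := by rw [ha]; exact hψ1 z'
      rw [this]; simp
    have hrest : ∑ u ∈ Finset.univ.erase z', (starRingEnd ℂ) (a u) * a u = 0 := by
      rw [Finset.sum_erase_eq_sub (Finset.mem_univ z'), hsum1, hz'1, sub_self]
    have hterm : ∀ u ∈ Finset.univ.erase z', 0 ≤ (starRingEnd ℂ) (a u) * a u := fun u _ => by
      simpa [Complex.star_def] using star_mul_self_nonneg (a u)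
    have hz0 : (starRingEnd ℂ) (a z) * a z = 0 :=
      (Finset.sum_eq_zero_iff_of_nonneg hterm).mp hrest z
        (Finset.mem_erase.mpr ⟨hzz, Finset.mem_univ z⟩)
    have haz : a z = 0 := by
      rcases mul_eq_zero.mp hz0 with hc | hc
      · exact star_eq_zero.mp (by rwa [Complex.star_def])
      · exact hc
    exact haz
end

section
/- Let ℰ be a linear map from d×d complex matrices to d×d complex matrices that maps every positive semidefinite matrix to a positive semidefinite matrix. Let (η_1,...,η_d) and (μ_1,...,μ_d) be orthonormal bases of ℂ^d, and suppose that ⟨η_z, ℰ(μ_{z'} μ_{z'}*) η_z⟩ = δ_{z,z'} for all z, z' ∈ {1,...,d}. Then ℰ(μ_z μ_z*) = η_z η_z* for all z ∈ {1,...,d}. -/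
open Matrix
open scoped ComplexOrder

lemma outer_posSemidef {d : ℕ} (ψ : Fin d → ℂ) : (outer ψ).PosSemidef := by
  rw [Matrix.posSemidef_iff_dotProduct_mulVec]
  constructor
  · ext k l
    simp [outer, Matrix.conjTranspose_apply, mul_comm]
  · intro x
    have hval : star x ⬝ᵥ outer ψ *ᵥ x
        = star (star ψ ⬝ᵥ x) * (star ψ ⬝ᵥ x) := by
      simp only [dotProduct, mulVec, outer, Matrix.of_apply, Pi.star_apply,
        star_sum, star_mul', star_star, RCLike.star_def, Finset.sum_mul,
        Finset.mul_sum]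
      rw [Finset.sum_comm]
      exact Finset.sum_congr rfl fun k _ => Finset.sum_congr rfl fun l _ => by
        simp only [Complex.conj_conj]; ring
    rw [hval]
    exact star_mul_self_nonneg _

theorem stmt14 {d : ℕ}
    (ℰ : Matrix (Fin d) (Fin d) ℂ →ₗ[ℂ] Matrix (Fin d) (Fin d) ℂ)
    (hpos : ∀ A : Matrix (Fin d) (Fin d) ℂ, A.PosSemidef → (ℰ A).PosSemidef)
    (η μ : Fin d → Fin d → ℂ)
    (hη : ∀ z z', (∑ k, (starRingEnd ℂ) (η z k) * η z' k) = if z = z' then 1 else 0)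
    (hμ : ∀ z z', (∑ k, (starRingEnd ℂ) (μ z k) * μ z' k) = if z = z' then 1 else 0)
    (h : ∀ z z', (∑ k, (starRingEnd ℂ) (η z k) * ((ℰ (outer (μ z'))) *ᵥ η z) k) =
      if z = z' then 1 else 0) :
    ∀ z, ℰ (outer (μ z)) = outer (η z) := by
  intro z
  set A := ℰ (outer (μ z)) with hAdef
  have hApsd : A.PosSemidef := hpos _ (outer_posSemidef _)
  have hker : ∀ i, i ≠ z → A *ᵥ η i = 0 := by
    intro i hi
    have h0 : star (η i) ⬝ᵥ A *ᵥ η i = 0 := by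
      have := h i z
      rw [if_neg hi] at this
      simpa [dotProduct] using this
    exact (hApsd.dotProduct_mulVec_zero_iff _).mp h0
  have hentry : ∀ i j, star (η i) ⬝ᵥ A *ᵥ η j
      = star (η i) ⬝ᵥ outer (η z) *ᵥ η j := by
    intro i j
    have hRHS : star (η i) ⬝ᵥ outer (η z) *ᵥ η j
        = (if i = z then (1:ℂ) else 0) * (if z = j then 1 else 0) := by
      rw [show star (η i) ⬝ᵥ outer (η z) *ᵥ η j
          = (∑ k, (starRingEnd ℂ) (η i k) * η z k)
            * (∑ l, (starRingEnd ℂ) (η z l) * η j l) by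
        simp only [dotProduct, mulVec, outer, Matrix.of_apply, Pi.star_apply,
          RCLike.star_def, Finset.mul_sum, Finset.sum_mul]
        rw [Finset.sum_comm]
        exact Finset.sum_congr rfl fun k _ => Finset.sum_congr rfl fun l _ => by ring]
      rw [hη i z, hη z j]
    by_cases hj : j = z
    · subst hj
      by_cases hi : i = j
      · subst hi
        have hii := h i i
        rw [if_pos rfl] at hii
        rw [hRHS]
        simpa [dotProduct, one_mul] using hii
      · -- i ≠ z, use hermitian
        have hAi : A *ᵥ η i = 0 := hker i hi
        have : star (η i) ⬝ᵥ A *ᵥ η j = star (A *ᵥ η i) ⬝ᵥ η j := by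
          rw [star_mulVec, ← dotProduct_mulVec, hApsd.1]
        rw [this, hAi, hRHS, if_neg hi]
        simp
    · rw [hker j hj, hRHS, if_neg (fun hzj => hj hzj.symm : ¬ z = j)]
      simp
  -- conjugation matrix
  set U : Matrix (Fin d) (Fin d) ℂ := Matrix.of (fun i k => star (η i k)) with hUdef
  have hconj : ∀ M : Matrix (Fin d) (Fin d) ℂ, ∀ i j,
      (U * M * Uᴴ) i j = star (η i) ⬝ᵥ M *ᵥ η j := by
    intro M i j
    simp only [Matrix.mul_apply, Matrix.conjTranspose_apply, dotProduct, mulVec,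
      hUdef, Matrix.of_apply, Pi.star_apply, star_star, RCLike.star_def,
      Complex.conj_conj, Finset.sum_mul, Finset.mul_sum]
    rw [Finset.sum_comm]
    exact Finset.sum_congr rfl fun k _ => Finset.sum_congr rfl fun l _ => by ring
  have hU : U * Uᴴ = 1 := by
    ext i j
    simp only [Matrix.mul_apply, Matrix.conjTranspose_apply, hUdef,
      Matrix.of_apply, star_star, Matrix.one_apply]
    simpa using hη i j
  have hU' : Uᴴ * U = 1 := mul_eq_one_comm.mp hU
  have hkey : U * A * Uᴴ = U * outer (η z) * Uᴴ := by
    ext i j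
    rw [hconj, hconj, hentry]
  calc A = (Uᴴ * U) * A * (Uᴴ * U) := by rw [hU']; simp
    _ = Uᴴ * (U * A * Uᴴ) * U := by noncomm_ring
    _ = Uᴴ * (U * outer (η z) * Uᴴ) * U := by rw [hkey]
    _ = (Uᴴ * U) * outer (η z) * (Uᴴ * U) := by noncomm_ring
    _ = outer (η z) := by rw [hU']; simp
end
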